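/- (Proposition 6, relations 11–13.) In the pre-extension setting, for all x, y, z, t ∈ R: α(x,y,z+t) − α(x,y,z) − α(x,y,t) = φ_x(λ(y,z,t)) + λ(x,yz,yt) − λ(xy,z,t); α(x,y+z,t) − α(x,y,t) − α(x,z,t) = φ_x(ρ(y,z,t)) − ρ(xy,xz,t) + λ(x,yt,zt) − ψ_t(λ(x,y,z)); and α(x+y,z,t) − α(x,z,t) − α(y,z,t) = −ψ_t(ρ(x,y,z)) − ρ(xz,yz,t) + ρ(x,y,zt). -/
import Mathlib


variable {R A : Type*}

/-- The bicenter `K_A = {c ∈ A : c·a = 0 = a·c for all a}`. -/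
def bicenter (A : Type*) [NonUnitalRing A] : Set A :=
  {c | ∀ b : A, c * b = 0 ∧ b * c = 0}

/-- A pre-extension datum `(φ, ψ, f, g)` of the ring `A` by the ring `R`:
`φ_x, ψ_x ∈ End_ℤ(A)` and `f, g : R² → A` satisfying the relations (10) and the
defining relations of the factor sets. -/
def IsPreExtension [Ring R] [NonUnitalRing A]
    (φ ψ : R → AddMonoid.End A) (f g : R → R → A) : Prop :=
  (∀ a : A, φ 1 a = a) ∧
  (∀ a : A, ψ 1 a = a) ∧
  (∀ (x : R) (a b : A), a * φ x b = ψ x a * b) ∧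
  (∀ (x : R) (a b : A), φ x (a * b) = φ x a * b) ∧
  (∀ (x : R) (a b : A), ψ x (b * a) = b * ψ x a) ∧
  (∀ (x : R) (a b : A), ψ x b * a = b * φ x a) ∧
  (∀ (x y : R) (a : A), φ x (ψ y a) = ψ y (φ x a)) ∧
  (∀ (x y : R) (a : A), φ x (φ y a) = φ (x * y) a + g x y * a) ∧
  (∀ (x y : R) (a : A), ψ y (ψ x a) = ψ (x * y) a + a * g x y) ∧
  (∀ (x y : R) (a : A), φ x a + φ y a = φ (x + y) a + f x y * a) ∧
  (∀ (x y : R) (a : A), ψ x a + ψ y a = ψ (x + y) a + a * f x y)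

variable [Ring R] [NonUnitalRing A]

/-- The obstruction component `ξ`. -/
def xiObs (f : R → R → A) (x y z : R) : A :=
  f y z - f (x + y) z + f x (y + z) - f x y

/-- The obstruction component `η`. -/
def etaObs (f : R → R → A) (x y : R) : A :=
  f x y - f y x

/-- The obstruction component `α`. -/
def alphaObs (φ ψ : R → AddMonoid.End A) (g : R → R → A) (x y z : R) : A :=
  φ x (g y z) - g (x * y) z + g x (y * z) - ψ z (g x y)

/-- The obstruction component `λ`. -/
def lambdaObs (φ : R → AddMonoid.End A) (f g : R → R → A) (x y z : R) : A :=
  φ x (f y z) - f (x * y) (x * z) + g x (y + z) - g x y - g x z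

/-- The obstruction component `ρ`. -/
def rhoObs (ψ : R → AddMonoid.End A) (f g : R → R → A) (x y z : R) : A :=
  ψ z (f x y) - f (x * z) (y * z) + g (x + y) z - g x z - g y z

/-- Proposition 6, relations 11–13: compatibilities of `α` with
`λ` and `ρ`. -/
theorem alpha_lambda_rho_relations
    [Nontrivial R] (φ ψ : R → AddMonoid.End A) (f g : R → R → A)
    (h : IsPreExtension φ ψ f g) :
    ∀ x y z t : R,
      alphaObs φ ψ g x y (z + t) - alphaObs φ ψ g x y z - alphaObs φ ψ g x y t
        = φ x (lambdaObs φ f g y z t) + lambdaObs φ f g x (y * z) (y * t)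
          - lambdaObs φ f g (x * y) z t ∧
      alphaObs φ ψ g x (y + z) t - alphaObs φ ψ g x y t - alphaObs φ ψ g x z t
        = φ x (rhoObs ψ f g y z t) - rhoObs ψ f g (x * y) (x * z) t
          + lambdaObs φ f g x (y * t) (z * t) - ψ t (lambdaObs φ f g x y z) ∧
      alphaObs φ ψ g (x + y) z t - alphaObs φ ψ g x z t - alphaObs φ ψ g y z t
        = -ψ t (rhoObs ψ f g x y z) - rhoObs ψ f g (x * z) (y * z) t
          + rhoObs ψ f g x y (z * t) := by
  obtain ⟨h1, h2, h3, h4, h5, h6, h7, h8, h9, h10, h11⟩ := h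
  intro x y z t
  refine ⟨?_, ?_, ?_⟩
  · simp only [alphaObs, lambdaObs, map_sub, map_add]
    have e1 : ψ (z + t) (g x y) = ψ z (g x y) + ψ t (g x y) - g x y * f z t := by
      rw [eq_sub_iff_add_eq]; exact (h11 z t (g x y)).symm
    rw [e1, h8 x y (f z t)]
    simp only [mul_add, mul_assoc]
    abel
  · simp only [alphaObs, lambdaObs, rhoObs, map_sub, map_add]
    rw [h7 x t (f y z)]
    simp only [add_mul, mul_add, mul_assoc]
    abel
  · simp only [alphaObs, rhoObs, map_sub, map_add]
    have e1 : φ (x + y) (g z t) = φ x (g z t) + φ y (g z t) - f x y * g z t := by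
      rw [eq_sub_iff_add_eq]; exact (h10 x y (g z t)).symm
    rw [e1, h9 z t (f x y)]
    simp only [add_mul, mul_assoc]
    abel
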